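/- Let α ∈ (0,1), let f : ℝ → ℝ be a continuous nonnegative function, and let x : ℝ → ℝ be a differentiable function with x(t) ≥ 0 for all t, satisfying the differential inequality x'(t) ≤ (1/(1−α)) f(t) x(t)^{α} for all t ∈ ℝ. Then for every t ≥ 0 one has x(t)^{1−α} ≤ x(0)^{1−α} + ∫₀^{t} f(s) ds. -/

import Mathlib

open Set

theorem gronwall_type_power_lemma
    (α : ℝ) (hα : α ∈ Set.Ioo (0 : ℝ) 1)
    (f : ℝ → ℝ) (hf : Continuous f) (hf0 : ∀ t, 0 ≤ f t)
    (x : ℝ → ℝ) (hx : Differentiable ℝ x) (hx0 : ∀ t, 0 ≤ x t)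
    (hineq : ∀ t : ℝ, deriv x t ≤ (1 / (1 - α)) * f t * x t ^ α) :
    ∀ t : ℝ, 0 ≤ t → x t ^ (1 - α) ≤ x 0 ^ (1 - α) + ∫ s in (0 : ℝ)..t, f s := by
  intro t ht
  have h1α : (0:ℝ) < 1 - α := by linarith [hα.2]
  set β : ℝ := 1 / (1 - α) with hβ
  have hβpos : 0 < β := by positivity
  have hβ1α : (1 - α) * β = 1 := by
    rw [hβ, mul_one_div, div_self h1α.ne']
  have hβα : β * α = β - 1 := by
    rw [hβ]; field_simp; ring
  refine le_of_forall_pos_le_add ?_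
  intro δ hδ
  set ε : ℝ := δ / (1 + t) with hε
  have hεpos : 0 < ε := by positivity
  set g : ℝ → ℝ := fun u => f u + ε with hg
  have hgc : Continuous g := hf.add continuous_const
  set I : ℝ → ℝ := fun s => (x 0 ^ (1 - α) + ε) + ∫ u in (0:ℝ)..s, g u with hI
  set B : ℝ → ℝ := fun s => I s ^ β with hBdef
  have hI' : ∀ s, HasDerivAt I (g s) s := fun s =>
    ((hgc.integral_hasStrictDerivAt 0 s).hasDerivAt).const_add (x 0 ^ (1 - α) + ε)
  have hIpos : ∀ s ∈ Icc (0:ℝ) t, 0 < I s := by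
    intro s hs
    have hint : 0 ≤ ∫ u in (0:ℝ)..s, g u := by
      apply intervalIntegral.integral_nonneg hs.1
      intro u _; exact add_nonneg (hf0 u) hεpos.le
    have : 0 ≤ x 0 ^ (1 - α) := Real.rpow_nonneg (hx0 0) _
    simp only [hI]; linarith
  have hB' : ∀ s ∈ Icc (0:ℝ) t,
      HasDerivAt B (β * I s ^ (β - 1) * g s) s := by
    intro s hs
    have h1 : HasDerivAt (fun y : ℝ => y ^ β) (β * I s ^ (β - 1)) (I s) :=
      Real.hasDerivAt_rpow_const (Or.inl (hIpos s hs).ne')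
    exact h1.comp s (hI' s)
  have key : ∀ s ∈ Icc (0:ℝ) t, x s ≤ B s := by
    apply image_le_of_deriv_right_lt_deriv_boundary' hx.continuous.continuousOn
      (fun s _ => (hx s).hasDerivAt.hasDerivWithinAt)
    · -- x 0 ≤ B 0
      have hI0 : I 0 = x 0 ^ (1 - α) + ε := by simp [hI]
      have h1 : x 0 = (x 0 ^ (1 - α)) ^ β := by
        rw [← Real.rpow_mul (hx0 0), hβ1α, Real.rpow_one]
      have h2 : (x 0 ^ (1 - α)) ^ β ≤ (x 0 ^ (1 - α) + ε) ^ β :=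
        Real.rpow_le_rpow (Real.rpow_nonneg (hx0 0) _) (by linarith) hβpos.le
      rw [← h1] at h2
      simp only [hBdef, hI0]
      linarith
    · -- continuity of B
      exact ((Real.continuous_rpow_const hβpos.le).comp
        ((continuous_const.add (intervalIntegral.continuous_primitive
          (fun a b => hgc.intervalIntegrable a b) 0)))).continuousOn
    · exact fun s hs => (hB' s (Ico_subset_Icc_self hs)).hasDerivWithinAt
    · -- bound
      intro s hs hxB
      have hIs := hIpos s (Ico_subset_Icc_self hs)
      have hxα : x s ^ α = I s ^ (β - 1) := by
        rw [hxB]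
        simp only [hBdef]
        rw [← Real.rpow_mul hIs.le, hβα]
      calc deriv x s ≤ (1 / (1 - α)) * f s * x s ^ α := hineq s
        _ = β * f s * I s ^ (β - 1) := by rw [hxα, hβ]
        _ < β * g s * I s ^ (β - 1) := by
            apply mul_lt_mul_of_pos_right _ (Real.rpow_pos_of_pos hIs _)
            apply mul_lt_mul_of_pos_left _ hβpos
            simp [hg]; linarith
        _ = β * I s ^ (β - 1) * g s := by ring
  have hxt : x t ≤ I t ^ β := key t ⟨ht, le_refl t⟩
  have h2 : x t ^ (1 - α) ≤ (I t ^ β) ^ (1 - α) :=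
    Real.rpow_le_rpow (hx0 t) hxt h1α.le
  have h3 : (I t ^ β) ^ (1 - α) = I t := by
    rw [← Real.rpow_mul (hIpos t ⟨ht, le_refl t⟩).le, mul_comm, hβ1α, Real.rpow_one]
  have h4 : I t = x 0 ^ (1 - α) + (∫ s in (0:ℝ)..t, f s) + δ := by
    simp only [hI, hg]
    rw [intervalIntegral.integral_add (hf.intervalIntegrable 0 t)
      (intervalIntegrable_const), intervalIntegral.integral_const, smul_eq_mul]
    have : ε + (t - 0) * ε = δ := by
      rw [hε]; field_simp; ring
    linarith
  rw [h3, h4] at h2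
  linarith
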